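/- Let n = 3, s(a) = a² for a ∈ ℝ, and m : ℝ³ → ℝ³ the constant function m(x) = (1,1,1). Define w : ℝ³ → ℝ³ by w_i(x) = s(y_i − y_{i+1}) · m_i(x) for i ∈ {1,2} and w_3(x) = 1, where y is the sorted version of x, and define f : ℝ³ → ℝ³ by f(x)_{σ(i)} = Σ_{j=i}^{3} w_j(x) for any permutation σ sorting x. Then f is not differentiable at the point x = (2,1,1); in particular, the scalar function α ↦ f₁((2,1,1) + α·e₃) equals s(1) + s(−α) + 1 for α ≤ 0 and s(1−α) + s(α) + 1 for 0 < α ≤ 1, and this function is not differentiable at α = 0. -/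

import Mathlib

/-- `σ` is a permutation sorting `x` in nonincreasing order. -/
def SortsPerm (n : ℕ) (σ : Equiv.Perm (Fin n)) (x : Fin n → ℝ) : Prop :=
  Antitone (x ∘ σ)

/-- The sorted (nonincreasing) version of `x`. -/
noncomputable def sortedDesc (n : ℕ) (x : Fin n → ℝ) : Fin n → ℝ :=
  fun i => x (Tuple.sort (fun j => -x j) i)

/-- `w_i(x) = s(y_i - y_{i+1}) * m_i(x)` for `i < n` and `w_n(x) = m_n(x)`,
where `y` is the sorted version of `x`. -/
noncomputable def wFun (n : ℕ) (s : ℝ → ℝ) (m : (Fin n → ℝ) → (Fin n → ℝ)) :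
    (Fin n → ℝ) → Fin n → ℝ :=
  fun x i =>
    if h : (i : ℕ) + 1 < n then
      s (sortedDesc n x i - sortedDesc n x ⟨(i : ℕ) + 1, h⟩) * m x i
    else m x i

lemma sortedDesc_eq {n : ℕ} {x : Fin n → ℝ} {σ : Equiv.Perm (Fin n)}
    (h : Antitone (x ∘ σ)) : sortedDesc n x = x ∘ σ := by
  have hm : Monotone ((fun j => -x j) ∘ σ) := by
    intro i j hij; simpa using h hij
  have h2 := (Tuple.comp_sort_eq_comp_iff_monotone (f := fun j => -x j) (σ := σ)).mpr hm
  funext i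
  have := congrFun h2 i
  simp only [Function.comp_apply, neg_inj] at this
  simp [sortedDesc, ← this]

lemma key (f : (Fin 3 → ℝ) → (Fin 3 → ℝ))
    (hfdef : ∀ (x : Fin 3 → ℝ) (σ : Equiv.Perm (Fin 3)), SortsPerm 3 σ x →
      ∀ i : Fin 3, f x (σ i) =
        ∑ j ∈ Finset.Ici i, wFun 3 (fun a => a ^ 2) (fun _ _ => 1) x j)
    (x : Fin 3 → ℝ) (σ : Equiv.Perm (Fin 3)) (hσ : Antitone (x ∘ σ)) :
    f x (σ 0) = (x (σ 0) - x (σ 1)) ^ 2 + (x (σ 1) - x (σ 2)) ^ 2 + 1 := by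
  have h := hfdef x σ hσ 0
  have hy := sortedDesc_eq hσ
  rw [h, show (Finset.Ici (0 : Fin 3)) = {0, 1, 2} by decide]
  rw [Finset.sum_insert (by decide), Finset.sum_insert (by decide), Finset.sum_singleton]
  simp [wFun, hy, show ((1:Fin 3):ℕ) = 1 from rfl]
  ring

lemma xval (α : ℝ) : (![2, 1, 1] + α • ![0, 0, 1] : Fin 3 → ℝ) = ![2, 1, 1 + α] := by
  funext i
  fin_cases i <;> simp [Matrix.cons_val_zero, Matrix.cons_val_one] <;> ring

lemma case1 (f : (Fin 3 → ℝ) → (Fin 3 → ℝ))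
    (hfdef : ∀ (x : Fin 3 → ℝ) (σ : Equiv.Perm (Fin 3)), SortsPerm 3 σ x →
      ∀ i : Fin 3, f x (σ i) =
        ∑ j ∈ Finset.Ici i, wFun 3 (fun a => a ^ 2) (fun _ _ => 1) x j)
    (α : ℝ) (hα : α ≤ 0) :
    f (![2, 1, 1] + α • ![0, 0, 1]) 0 = (1 : ℝ) ^ 2 + (-α) ^ 2 + 1 := by
  rw [xval]
  have hσ : Antitone ((![2, 1, 1 + α] : Fin 3 → ℝ) ∘ (Equiv.refl (Fin 3))) := by
    intro i j hij
    fin_cases i <;> fin_cases j <;>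
      simp_all [Fin.le_def] <;> linarith
  have := key f hfdef ![2, 1, 1 + α] (Equiv.refl (Fin 3)) hσ
  simp only [Equiv.refl_apply] at this
  rw [this]
  norm_num [Matrix.cons_val_one, Matrix.cons_val_two]

lemma case2 (f : (Fin 3 → ℝ) → (Fin 3 → ℝ))
    (hfdef : ∀ (x : Fin 3 → ℝ) (σ : Equiv.Perm (Fin 3)), SortsPerm 3 σ x →
      ∀ i : Fin 3, f x (σ i) =
        ∑ j ∈ Finset.Ici i, wFun 3 (fun a => a ^ 2) (fun _ _ => 1) x j)
    (α : ℝ) (h0 : 0 < α) (h1 : α ≤ 1) :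
    f (![2, 1, 1] + α • ![0, 0, 1]) 0 = (1 - α) ^ 2 + α ^ 2 + 1 := by
  rw [xval]
  set σ : Equiv.Perm (Fin 3) := Equiv.swap 1 2 with hσdef
  have hσ0 : σ 0 = 0 := by decide
  have hσ1 : σ 1 = 2 := by decide
  have hσ2 : σ 2 = 1 := by decide
  have hσ : Antitone ((![2, 1, 1 + α] : Fin 3 → ℝ) ∘ σ) := by
    intro i j hij
    fin_cases i <;> fin_cases j <;>
      simp_all [Fin.le_def, hσ0, hσ1, hσ2] <;> linarith
  have := key f hfdef ![2, 1, 1 + α] σ hσ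
  rw [hσ0, hσ1, hσ2] at this
  rw [this]
  norm_num [Matrix.cons_val_one, Matrix.cons_val_two]
  ring

lemma notdiff_g (g : ℝ → ℝ)
    (h1 : ∀ α : ℝ, α ≤ 0 → g α = (1 : ℝ) ^ 2 + (-α) ^ 2 + 1)
    (h2 : ∀ α : ℝ, 0 < α → α ≤ 1 → g α = (1 - α) ^ 2 + α ^ 2 + 1) :
    ¬ DifferentiableAt ℝ g 0 := by
  intro hd
  have hD := hd.hasDerivAt
  set d := deriv g 0 with hdd
  -- left side
  have u1 : UniqueDiffWithinAt ℝ (Set.Iic (0:ℝ)) 0 := uniqueDiffOn_Iic 0 0 (by simp)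
  have p1 : HasDerivAt (fun α : ℝ => (1:ℝ) ^ 2 + (-α) ^ 2 + 1) 0 0 := by
    have : HasDerivAt (fun α : ℝ => α ^ 2) ((2:ℕ) * 0 ^ 1) 0 := hasDerivAt_pow 2 0
    have h' := (this.const_add ((1:ℝ)^2)).add_const 1
    have heq : (fun α : ℝ => (1:ℝ) ^ 2 + (-α) ^ 2 + 1) =
        (fun α : ℝ => (1:ℝ) ^ 2 + α ^ 2 + 1) := by funext a; ring
    rw [heq]
    simpa using h'
  have q1 : HasDerivWithinAt g 0 (Set.Iic 0) 0 :=
    p1.hasDerivWithinAt.congr (fun y hy => (h1 y hy)) (h1 0 le_rfl)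
  have q1' : HasDerivWithinAt g d (Set.Iic 0) 0 := hD.hasDerivWithinAt
  have e1 : d = 0 := by rw [← q1'.derivWithin u1, q1.derivWithin u1]
  -- right side
  have u2 : UniqueDiffWithinAt ℝ (Set.Ioc (0:ℝ) 1) 0 :=
    uniqueDiffWithinAt_convex (convex_Ioc 0 1) (by norm_num)
      (by rw [closure_Ioc one_ne_zero.symm]; exact Set.mem_Icc.2 ⟨le_rfl, zero_le_one⟩)
  have p2 : HasDerivAt (fun α : ℝ => (1 - α) ^ 2 + α ^ 2 + 1) (-2) 0 := by
    have ha : HasDerivAt (fun α : ℝ => α ^ 2) ((2:ℕ) * 0 ^ 1) 0 := hasDerivAt_pow 2 0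
    have hb : HasDerivAt (fun α : ℝ => (1 - α)) (-1) 0 := by
      simpa using (hasDerivAt_id (0:ℝ)).const_sub 1
    have hc : HasDerivAt (fun α : ℝ => (1 - α) ^ 2) (2 * (1 - 0) ^ 1 * (-1)) 0 := hb.pow 2
    have := (hc.add ha).add_const 1
    exact this.congr_deriv (by norm_num)
  have q2 : HasDerivWithinAt g (-2) (Set.Ioc 0 1) 0 :=
    p2.hasDerivWithinAt.congr (fun y hy => h2 y hy.1 hy.2) (by rw [h1 0 le_rfl]; norm_num)
  have q2' : HasDerivWithinAt g d (Set.Ioc 0 1) 0 := hD.hasDerivWithinAt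
  have e2 : d = -2 := by rw [← q2'.derivWithin u2, q2.derivWithin u2]
  rw [e1] at e2; norm_num at e2

/-- with `n = 3`, `s a = a ^ 2` and `m ≡ (1,1,1)`, the resulting intra
order-preserving function `f` is not differentiable at `(2,1,1)`; in particular the scalar
function `α ↦ f₁((2,1,1) + α • e₃)` has the stated closed form and is not differentiable
at `0`. -/
theorem stmt_15 (f : (Fin 3 → ℝ) → (Fin 3 → ℝ))
    (hfdef : ∀ (x : Fin 3 → ℝ) (σ : Equiv.Perm (Fin 3)), SortsPerm 3 σ x →
      ∀ i : Fin 3, f x (σ i) =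
        ∑ j ∈ Finset.Ici i, wFun 3 (fun a => a ^ 2) (fun _ _ => 1) x j) :
    (∀ α : ℝ, α ≤ 0 →
      f (![2, 1, 1] + α • ![0, 0, 1]) 0 = (1 : ℝ) ^ 2 + (-α) ^ 2 + 1) ∧
    (∀ α : ℝ, 0 < α → α ≤ 1 →
      f (![2, 1, 1] + α • ![0, 0, 1]) 0 = (1 - α) ^ 2 + α ^ 2 + 1) ∧
    ¬ DifferentiableAt ℝ (fun α : ℝ => f (![2, 1, 1] + α • ![0, 0, 1]) 0) 0 ∧
    ¬ DifferentiableAt ℝ f ![2, 1, 1] := by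
  have hgd : ¬ DifferentiableAt ℝ (fun α : ℝ => f (![2, 1, 1] + α • ![0, 0, 1]) 0) 0 :=
    notdiff_g _ (case1 f hfdef) (case2 f hfdef)
  refine ⟨case1 f hfdef, case2 f hfdef, hgd, ?_⟩
  intro hf
  apply hgd
  have hc : DifferentiableAt ℝ (fun α : ℝ => (![2, 1, 1] + α • ![0, 0, 1] : Fin 3 → ℝ)) 0 :=
    (differentiableAt_const _).add ((differentiableAt_id).smul_const ![0, 0, 1])
  have hc0 : (![2, 1, 1] + (0:ℝ) • ![0, 0, 1] : Fin 3 → ℝ) = ![2, 1, 1] := by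
    simp
  have hf' : DifferentiableAt ℝ f (![2, 1, 1] + (0:ℝ) • ![0, 0, 1]) := by
    rw [hc0]; exact hf
  have hcomp : DifferentiableAt ℝ (fun α : ℝ => f (![2, 1, 1] + α • ![0, 0, 1])) 0 :=
    DifferentiableAt.comp 0 hf' hc
  exact (differentiableAt_pi.mp hcomp) 0
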